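/- Let k, d ≥ 1, H a Hermitian form on ℂ^k, D̄ : ℂ^k → ℂ^k ℂ-linear, τ, γ ∈ ℂ^k, and a, b nonzero complex numbers. Define e(x) := a·exp(π·(H(γ,x) + H(γ,γ)/2)) and E(y) := b·exp(π·(H(D̄γ, y) + H(D̄γ, D̄γ)/2)). Assume: (i) F : ℂ^{k+1} → ℂ^{k+1} satisfies F(λz) = λ^d·F(z) for all λ ∈ ℂ and z ∈ ℂ^{k+1}; (ii) θ : ℂ^k → ℂ^{k+1} satisfies θ(x+γ) = e(x)^{−1}·θ(x) and θ(y+D̄γ) = E(y)^{−1}·θ(y) for all x, y ∈ ℂ^k; (iii) exp(π·H(τ, D̄γ))·e(x)^d = E(D̄x + τ) for all x ∈ ℂ^k; (iv) c : ℂ^k → ℂ satisfies c(x)·F(θ(x)) = exp(π·H(τ, D̄x))·θ(D̄x + τ) for all x ∈ ℂ^k. Then for every x ∈ ℂ^k with F(θ(x+γ)) ≠ 0, one has c(x+γ) = c(x). -/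

import Mathlib

open Complex

/-- periodicity of the proportionality factor `c` relating the
polynomial lift `F` of a Lattès map to the lifted dilation on `L(H,α)`.
Here `e(x) = a·exp(π(H(γ,x)+H(γ,γ)/2))` and
`E(y) = b·exp(π(H(D̄γ,y)+H(D̄γ,D̄γ)/2))` are the multipliers at `γ` and `D̄γ`. -/
theorem periodicity_of_factor
    (k d : ℕ) (hk : 1 ≤ k) (hd : 1 ≤ d)
    (H : (Fin k → ℂ) → (Fin k → ℂ) → ℂ)
    -- `H` is a Hermitian form
    (Hadd : ∀ w w₁ w₂, H w (w₁ + w₂) = H w w₁ + H w w₂)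
    (Hsmul : ∀ (c : ℂ) w w', H w (c • w') = c * H w w')
    (Hconj : ∀ w w', H w' w = starRingEnd ℂ (H w w'))
    (D : (Fin k → ℂ) →ₗ[ℂ] (Fin k → ℂ))
    (τ γ : Fin k → ℂ)
    (a b : ℂ) (ha : a ≠ 0) (hb : b ≠ 0)
    (F : (Fin (k + 1) → ℂ) → (Fin (k + 1) → ℂ))
    -- (i) `F` is homogeneous of degree `d`
    (hF : ∀ (lam : ℂ) (z : Fin (k + 1) → ℂ), F (lam • z) = lam ^ d • F z)
    (θ : (Fin k → ℂ) → (Fin (k + 1) → ℂ))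
    -- (ii) `θ(x+γ) = e(x)⁻¹·θ(x)` and `θ(y+D̄γ) = E(y)⁻¹·θ(y)`
    (hθγ : ∀ x, θ (x + γ) =
      (a * Complex.exp ((Real.pi : ℂ) * (H γ x + H γ γ / 2)))⁻¹ • θ x)
    (hθDγ : ∀ y, θ (y + D γ) =
      (b * Complex.exp ((Real.pi : ℂ) * (H (D γ) y + H (D γ) (D γ) / 2)))⁻¹ • θ y)
    -- (iii) `exp(π·H(τ,D̄γ))·e(x)^d = E(D̄x + τ)`
    (hmultiplier : ∀ x, Complex.exp ((Real.pi : ℂ) * H τ (D γ)) *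
        (a * Complex.exp ((Real.pi : ℂ) * (H γ x + H γ γ / 2))) ^ d =
      b * Complex.exp ((Real.pi : ℂ) * (H (D γ) (D x + τ) + H (D γ) (D γ) / 2)))
    -- (iv) `c(x)·F(θ(x)) = exp(π·H(τ,D̄x))·θ(D̄x + τ)`
    (c : (Fin k → ℂ) → ℂ)
    (hc : ∀ x, c x • F (θ x) =
      Complex.exp ((Real.pi : ℂ) * H τ (D x)) • θ (D x + τ)) :
    ∀ x : Fin k → ℂ, F (θ (x + γ)) ≠ 0 → c (x + γ) = c x := by
  intro x hFne
  set e : ℂ := a * Complex.exp ((Real.pi : ℂ) * (H γ x + H γ γ / 2)) with he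
  have hexp : ∀ z : ℂ, Complex.exp z ≠ 0 := Complex.exp_ne_zero
  have heN : e ≠ 0 := mul_ne_zero ha (hexp _)
  set E : ℂ := b * Complex.exp ((Real.pi : ℂ) * (H (D γ) (D x + τ) + H (D γ) (D γ) / 2)) with hE
  have hEN : E ≠ 0 := mul_ne_zero hb (hexp _)
  have hFθ : F (θ (x + γ)) = (e⁻¹) ^ d • F (θ x) := by
    rw [hθγ, hF]
  have hDadd : D (x + γ) = D x + D γ := map_add D x γ
  have hθ2 : θ (D (x + γ) + τ) = E⁻¹ • θ (D x + τ) := by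
    rw [hDadd]
    have h3 : D x + D γ + τ = (D x + τ) + D γ := by abel
    rw [h3, hθDγ]
  have hexpadd : Complex.exp ((Real.pi : ℂ) * H τ (D (x + γ)))
      = Complex.exp ((Real.pi : ℂ) * H τ (D x)) * Complex.exp ((Real.pi : ℂ) * H τ (D γ)) := by
    rw [hDadd, Hadd, mul_add, Complex.exp_add]
  have hmul : Complex.exp ((Real.pi : ℂ) * H τ (D γ)) * e ^ d = E := hmultiplier x
  have hscal : Complex.exp ((Real.pi : ℂ) * H τ (D x)) *
      Complex.exp ((Real.pi : ℂ) * H τ (D γ)) * E⁻¹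
      = (e⁻¹) ^ d * Complex.exp ((Real.pi : ℂ) * H τ (D x)) := by
    rw [← hmul, inv_pow]
    field_simp
  have key : c (x + γ) • F (θ (x + γ)) = c x • F (θ (x + γ)) := by
    calc c (x + γ) • F (θ (x + γ))
        = (Complex.exp ((Real.pi : ℂ) * H τ (D x)) *
            Complex.exp ((Real.pi : ℂ) * H τ (D γ)) * E⁻¹) • θ (D x + τ) := by
          rw [hc (x + γ), hθ2, hexpadd, smul_smul]
      _ = ((e⁻¹) ^ d * Complex.exp ((Real.pi : ℂ) * H τ (D x))) • θ (D x + τ) := by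
          rw [hscal]
      _ = (e⁻¹) ^ d • (c x • F (θ x)) := by rw [← smul_smul, hc x]
      _ = c x • F (θ (x + γ)) := by rw [hFθ, smul_comm]
  obtain ⟨i, hi⟩ := Function.ne_iff.mp hFne
  have h4 : c (x + γ) * F (θ (x + γ)) i = c x * F (θ (x + γ)) i := congrFun key i
  exact mul_right_cancel₀ hi h4
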